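/- Let 0 < p ≤ 1/2 and let (F₁, F₂) be a cross-intersecting pair of families of subsets of [N], meaning every A ∈ F₁ and B ∈ F₂ satisfy A ∩ B ≠ ∅. Then μ_p(F₁)·μ_p(F₂) ≤ p². -/

import Mathlib

/-- The `p`-biased measure of a family `F` of subsets of `[N]`:
`μ_p(F) = Σ_{X ∈ F} p^{|X|} (1-p)^{N-|X|}`. -/
noncomputable def biasedMeasure (N : ℕ) (p : ℝ) (F : Finset (Finset (Fin N))) : ℝ :=
  ∑ X ∈ F, p ^ X.card * (1 - p) ^ (N - X.card)

open Finset

namespace BMCross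

variable {N : ℕ}

/-- The weight of a single set. -/
noncomputable def mu (N : ℕ) (p : ℝ) (A : Finset (Fin N)) : ℝ :=
  p ^ A.card * (1 - p) ^ (N - A.card)

/-- One-coordinate (unnormalized) biased character. -/
noncomputable def chi (p : ℝ) (A : Finset (Fin N)) (i : Fin N) : ℝ :=
  (if i ∈ A then 1 else 0) - p

/-- Basis function indexed by `S`. -/
noncomputable def eb (p : ℝ) (S A : Finset (Fin N)) : ℝ := ∏ i ∈ S, chi p A i

/-- Unnormalized Fourier coefficient of the indicator of `F`. -/
noncomputable def hat (p : ℝ) (F : Finset (Finset (Fin N))) (S : Finset (Fin N)) : ℝ :=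
  ∑ A ∈ F, mu N p A * eb p S A

lemma mu_eq_prod (p : ℝ) (A : Finset (Fin N)) :
    mu N p A = ∏ i, (if i ∈ A then p else 1 - p) := by
  classical
  rw [← Finset.prod_mul_prod_compl A fun i => if i ∈ A then p else 1 - p]
  rw [Finset.prod_congr rfl (fun i hi => if_pos hi),
    Finset.prod_congr rfl (fun i (hi : i ∈ Aᶜ) => if_neg (Finset.mem_compl.mp hi))]
  simp [mu, Finset.card_compl]

lemma mu_nonneg {p : ℝ} (hp : 0 ≤ p) (hq : 0 ≤ 1 - p) (A : Finset (Fin N)) :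
    0 ≤ mu N p A :=
  mul_nonneg (pow_nonneg hp _) (pow_nonneg hq _)

/-- Expansion of the Parseval kernel as a product. -/
lemma kernelP (p : ℝ) (A B : Finset (Fin N)) :
    ∑ S : Finset (Fin N), ((p * (1 - p))⁻¹) ^ S.card * (eb p S A * eb p S B)
      = ∏ i, (chi p A i * chi p B i * (p * (1 - p))⁻¹ + 1) := by
  classical
  rw [Finset.prod_add (fun i => chi p A i * chi p B i * (p * (1 - p))⁻¹) (fun _ => (1 : ℝ))
    Finset.univ]
  rw [Finset.powerset_univ]
  refine Finset.sum_congr rfl fun S _ => ?_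
  rw [Finset.prod_const_one, mul_one, Finset.prod_mul_distrib, Finset.prod_mul_distrib,
    Finset.prod_const, eb, eb]
  ring

/-- Expansion of the disjointness kernel as a product. -/
lemma kernelD (p : ℝ) (A B : Finset (Fin N)) :
    ∑ S : Finset (Fin N),
        ((-(1 - p)⁻¹) ^ S.card * (1 - p) ^ (N - S.card)) * (eb p S A * eb p S B)
      = ∏ i, (chi p A i * chi p B i * (-(1 - p)⁻¹) + (1 - p)) := by
  classical
  rw [Finset.prod_add (fun i => chi p A i * chi p B i * (-(1 - p)⁻¹)) (fun _ => (1 - p : ℝ))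
    Finset.univ]
  rw [Finset.powerset_univ]
  refine Finset.sum_congr rfl fun S _ => ?_
  rw [Finset.prod_const, Finset.prod_mul_distrib, Finset.prod_mul_distrib, Finset.prod_const,
    eb, eb, Finset.card_sdiff_of_subset (Finset.subset_univ S), Finset.card_univ, Fintype.card_fin]
  ring

lemma kernelP_diag {p : ℝ} (hp : 0 < p) (hq : 0 < 1 - p) (A : Finset (Fin N)) :
    mu N p A * ∏ i, (chi p A i * chi p A i * (p * (1 - p))⁻¹ + 1) = 1 := by
  classical
  have hp' : p ≠ 0 := hp.ne'
  have hq' : (1:ℝ) - p ≠ 0 := hq.ne'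
  have hstep : ∀ i ∈ (Finset.univ : Finset (Fin N)),
      (if i ∈ A then p else 1 - p) * (chi p A i * chi p A i * (p * (1 - p))⁻¹ + 1) = 1 := by
    intro i _
    by_cases h : i ∈ A
    · rw [if_pos h]
      simp only [chi, if_pos h]
      rw [mul_inv]
      field_simp
      ring
    · rw [if_neg h]
      simp only [chi, if_neg h]
      rw [mul_inv]
      field_simp
      ring
  rw [mu_eq_prod, ← Finset.prod_mul_distrib, Finset.prod_congr rfl hstep,
    Finset.prod_const_one]

lemma kernelP_off {p : ℝ} (hp : 0 < p) (hq : 0 < 1 - p) {A B : Finset (Fin N)}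
    (hAB : A ≠ B) :
    ∏ i, (chi p A i * chi p B i * (p * (1 - p))⁻¹ + 1) = 0 := by
  classical
  have : ∃ i, ¬ (i ∈ A ↔ i ∈ B) := by
    by_contra h
    push_neg at h
    exact hAB (Finset.ext fun i => h i)
  obtain ⟨i, hi⟩ := this
  refine Finset.prod_eq_zero (Finset.mem_univ i) ?_
  have hp' : p ≠ 0 := hp.ne'
  have hq' : (1:ℝ) - p ≠ 0 := hq.ne'
  rcases Classical.em (i ∈ A) with h1 | h1 <;> rcases Classical.em (i ∈ B) with h2 | h2
  · exact absurd (iff_of_true h1 h2) hi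
  · simp only [chi, if_pos h1, if_neg h2]
    rw [mul_inv]
    field_simp
    try ring
  · simp only [chi, if_neg h1, if_pos h2]
    rw [mul_inv]
    field_simp
    try ring
  · exact absurd (iff_of_false h1 h2) hi

lemma kernelD_zero {p : ℝ} (hq : 0 < 1 - p) {A B : Finset (Fin N)}
    (h : (A ∩ B).Nonempty) :
    ∏ i, (chi p A i * chi p B i * (-(1 - p)⁻¹) + (1 - p)) = 0 := by
  classical
  obtain ⟨i, hi⟩ := h
  rw [Finset.mem_inter] at hi
  refine Finset.prod_eq_zero (Finset.mem_univ i) ?_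
  simp only [chi, hi.1, hi.2, if_true]
  field_simp
  ring

/-- Parseval identity for indicators. -/
lemma parseval {p : ℝ} (hp : 0 < p) (hq : 0 < 1 - p) (F : Finset (Finset (Fin N))) :
    ∑ S : Finset (Fin N), ((p * (1 - p))⁻¹) ^ S.card * (hat p F S) ^ 2
      = ∑ A ∈ F, mu N p A := by
  classical
  have step1 : ∀ S : Finset (Fin N),
      ((p * (1 - p))⁻¹) ^ S.card * (hat p F S) ^ 2
        = ∑ A ∈ F, ∑ B ∈ F, (mu N p A * mu N p B) *
            (((p * (1 - p))⁻¹) ^ S.card * (eb p S A * eb p S B)) := by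
    intro S
    rw [hat, sq, Finset.sum_mul_sum, Finset.mul_sum]
    refine Finset.sum_congr rfl fun A _ => ?_
    rw [Finset.mul_sum]
    refine Finset.sum_congr rfl fun B _ => ?_
    ring
  calc ∑ S : Finset (Fin N), ((p * (1 - p))⁻¹) ^ S.card * (hat p F S) ^ 2
      = ∑ S : Finset (Fin N), ∑ A ∈ F, ∑ B ∈ F, (mu N p A * mu N p B) *
          (((p * (1 - p))⁻¹) ^ S.card * (eb p S A * eb p S B)) :=
        Finset.sum_congr rfl fun S _ => step1 S
    _ = ∑ A ∈ F, ∑ S : Finset (Fin N), ∑ B ∈ F, (mu N p A * mu N p B) *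
          (((p * (1 - p))⁻¹) ^ S.card * (eb p S A * eb p S B)) := Finset.sum_comm
    _ = ∑ A ∈ F, ∑ B ∈ F, ∑ S : Finset (Fin N), (mu N p A * mu N p B) *
          (((p * (1 - p))⁻¹) ^ S.card * (eb p S A * eb p S B)) :=
        Finset.sum_congr rfl fun A _ => Finset.sum_comm
    _ = ∑ A ∈ F, ∑ B ∈ F, (mu N p A * mu N p B) *
          ∏ i, (chi p A i * chi p B i * (p * (1 - p))⁻¹ + 1) := by
        refine Finset.sum_congr rfl fun A _ => Finset.sum_congr rfl fun B _ => ?_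
        rw [← Finset.mul_sum, kernelP]
    _ = ∑ A ∈ F, mu N p A := by
        refine Finset.sum_congr rfl fun A hA => ?_
        rw [Finset.sum_eq_single_of_mem A hA ?_]
        · rw [mul_comm (mu N p A) (mu N p A), mul_assoc, kernelP_diag hp hq, mul_one]
        · intro B _ hBA
          rw [kernelP_off hp hq (Ne.symm hBA), mul_zero]

/-- The disjointness kernel annihilates a cross-intersecting pair. -/
lemma vanish {p : ℝ} (hq : 0 < 1 - p) (F₁ F₂ : Finset (Finset (Fin N)))
    (hcross : ∀ A ∈ F₁, ∀ B ∈ F₂, (A ∩ B).Nonempty) :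
    ∑ S : Finset (Fin N),
        ((-(1 - p)⁻¹) ^ S.card * (1 - p) ^ (N - S.card)) * (hat p F₁ S * hat p F₂ S) = 0 := by
  classical
  have step1 : ∀ S : Finset (Fin N),
      ((-(1 - p)⁻¹) ^ S.card * (1 - p) ^ (N - S.card)) * (hat p F₁ S * hat p F₂ S)
        = ∑ A ∈ F₁, ∑ B ∈ F₂, (mu N p A * mu N p B) *
            (((-(1 - p)⁻¹) ^ S.card * (1 - p) ^ (N - S.card)) * (eb p S A * eb p S B)) := by
    intro S
    rw [hat, hat, Finset.sum_mul_sum, Finset.mul_sum]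
    refine Finset.sum_congr rfl fun A _ => ?_
    rw [Finset.mul_sum]
    refine Finset.sum_congr rfl fun B _ => ?_
    ring
  calc ∑ S : Finset (Fin N),
        ((-(1 - p)⁻¹) ^ S.card * (1 - p) ^ (N - S.card)) * (hat p F₁ S * hat p F₂ S)
      = ∑ S : Finset (Fin N), ∑ A ∈ F₁, ∑ B ∈ F₂, (mu N p A * mu N p B) *
          (((-(1 - p)⁻¹) ^ S.card * (1 - p) ^ (N - S.card)) * (eb p S A * eb p S B)) :=
        Finset.sum_congr rfl fun S _ => step1 S
    _ = ∑ A ∈ F₁, ∑ S : Finset (Fin N), ∑ B ∈ F₂, (mu N p A * mu N p B) *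
          (((-(1 - p)⁻¹) ^ S.card * (1 - p) ^ (N - S.card)) * (eb p S A * eb p S B)) :=
        Finset.sum_comm
    _ = ∑ A ∈ F₁, ∑ B ∈ F₂, ∑ S : Finset (Fin N), (mu N p A * mu N p B) *
          (((-(1 - p)⁻¹) ^ S.card * (1 - p) ^ (N - S.card)) * (eb p S A * eb p S B)) :=
        Finset.sum_congr rfl fun A _ => Finset.sum_comm
    _ = ∑ A ∈ F₁, ∑ B ∈ F₂, (mu N p A * mu N p B) *
          ∏ i, (chi p A i * chi p B i * (-(1 - p)⁻¹) + (1 - p)) := by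
        refine Finset.sum_congr rfl fun A _ => Finset.sum_congr rfl fun B _ => ?_
        rw [← Finset.mul_sum, kernelD]
    _ = 0 := by
        refine Finset.sum_eq_zero fun A hA => Finset.sum_eq_zero fun B hB => ?_
        rw [kernelD_zero hq (hcross A hA B hB), mul_zero]

lemma final_algebra {p q α β : ℝ} (hp : 0 < p) (hq0 : 0 < q) (hpq1 : p + q = 1)
    (hα0 : 0 ≤ α) (hβ0 : 0 ≤ β) (hαα : 0 ≤ α - α ^ 2) (hββ : 0 ≤ β - β ^ 2)
    (hsq : q ^ 2 * (α * β) ^ 2 ≤ p ^ 2 * ((α - α ^ 2) * (β - β ^ 2))) :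
    α * β ≤ p ^ 2 := by
  rcases eq_or_lt_of_le (mul_nonneg hα0 hβ0) with h0 | hpos
  · rw [← h0]
    positivity
  have hαpos : 0 < α := by
    rcases lt_or_ge 0 α with h | h
    · exact h
    · exfalso
      have h2 := mul_le_mul_of_nonneg_right h hβ0
      rw [zero_mul] at h2
      linarith
  have hβpos : 0 < β := by
    rcases lt_or_ge 0 β with h | h
    · exact h
    · exfalso
      have h2 := mul_le_mul_of_nonneg_left h hα0
      rw [mul_zero] at h2
      linarith
  have hα1 : α ≤ 1 := by nlinarith
  have hβ1 : β ≤ 1 := by nlinarith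
  have h2 : q ^ 2 * (α * β) ≤ p ^ 2 * ((1 - α) * (1 - β)) := by
    have hrw : p ^ 2 * ((α - α ^ 2) * (β - β ^ 2))
        = (p ^ 2 * ((1 - α) * (1 - β))) * (α * β) := by ring
    have hrw2 : q ^ 2 * (α * β) ^ 2 = (q ^ 2 * (α * β)) * (α * β) := by ring
    rw [hrw, hrw2] at hsq
    exact le_of_mul_le_mul_right hsq hpos
  set s : ℝ := Real.sqrt (α * β) with hsdef
  have hs0 : 0 ≤ s := Real.sqrt_nonneg _
  have hs2 : s ^ 2 = α * β := Real.sq_sqrt hpos.le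
  have hs_amgm : 2 * s ≤ α + β := by
    have hsab : s = Real.sqrt α * Real.sqrt β := Real.sqrt_mul hα0 β
    nlinarith [sq_nonneg (Real.sqrt α - Real.sqrt β), Real.sq_sqrt hα0, Real.sq_sqrt hβ0,
      Real.sqrt_nonneg α, Real.sqrt_nonneg β]
  have hs1 : s ≤ 1 := by nlinarith
  have h3 : (q * s) ^ 2 ≤ (p * (1 - s)) ^ 2 := by
    have hub : (1 - α) * (1 - β) ≤ (1 - s) ^ 2 := by nlinarith
    calc (q * s) ^ 2 = q ^ 2 * (α * β) := by rw [mul_pow, hs2]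
      _ ≤ p ^ 2 * ((1 - α) * (1 - β)) := h2
      _ ≤ p ^ 2 * (1 - s) ^ 2 := by nlinarith [sq_nonneg p]
      _ = (p * (1 - s)) ^ 2 := by ring
  have hl : 0 ≤ q * s := mul_nonneg hq0.le hs0
  have hr : 0 ≤ p * (1 - s) := mul_nonneg hp.le (by linarith)
  have h4 : q * s ≤ p * (1 - s) := by
    have h5 := Real.sqrt_le_sqrt h3
    rwa [Real.sqrt_sq hl, Real.sqrt_sq hr] at h5
  have hss : s * p + s * q = s := by
    rw [← mul_add, hpq1, mul_one]
  have h5 : s ≤ p := by nlinarith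
  have h6 : s ^ 2 ≤ p ^ 2 := pow_le_pow_left₀ hs0 h5 2
  rwa [hs2] at h6

end BMCross

open BMCross in
/-- If `0 < p ≤ 1/2` and `(F₁, F₂)` is a cross-intersecting pair of families of subsets of
`[N]`, then `μ_p(F₁) · μ_p(F₂) ≤ p²`. -/
theorem biasedMeasure_cross_intersecting {N : ℕ} (p : ℝ) (hp : 0 < p) (hp2 : p ≤ 1 / 2)
    (F₁ F₂ : Finset (Finset (Fin N)))
    (hcross : ∀ A ∈ F₁, ∀ B ∈ F₂, (A ∩ B).Nonempty) :
    biasedMeasure N p F₁ * biasedMeasure N p F₂ ≤ p ^ 2 := by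
  classical
  have hq0 : 0 < 1 - p := by linarith
  have hpq0 : (0 : ℝ) < p * (1 - p) := mul_pos hp hq0
  have hple : p ≤ 1 - p := by linarith
  set q : ℝ := 1 - p with hqdef
  -- trivial case N = 0
  rcases Nat.eq_zero_or_pos N with hN | hN
  · subst hN
    rcases Finset.eq_empty_or_nonempty F₁ with h1 | h1
    · rw [h1]
      simp only [biasedMeasure, Finset.sum_empty, zero_mul]
      positivity
    rcases Finset.eq_empty_or_nonempty F₂ with h2 | h2
    · rw [h2]
      simp only [biasedMeasure, Finset.sum_empty, mul_zero]
      positivity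
    obtain ⟨A, hA⟩ := h1
    obtain ⟨B, hB⟩ := h2
    obtain ⟨i, _⟩ := hcross A hA B hB
    exact i.elim0
  -- main case
  set α : ℝ := biasedMeasure N p F₁ with hαdef
  set β : ℝ := biasedMeasure N p F₂ with hβdef
  have hα_hat : hat p F₁ (∅ : Finset (Fin N)) = α := by
    simp [hat, eb, mu, biasedMeasure, hαdef]
  have hβ_hat : hat p F₂ (∅ : Finset (Fin N)) = β := by
    simp [hat, eb, mu, biasedMeasure, hβdef]
  have hα0 : 0 ≤ α :=
    Finset.sum_nonneg fun A _ => mul_nonneg (pow_nonneg hp.le _) (pow_nonneg hq0.le _)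
  have hβ0 : 0 ≤ β :=
    Finset.sum_nonneg fun A _ => mul_nonneg (pow_nonneg hp.le _) (pow_nonneg hq0.le _)
  -- the two square-root weighted sequences
  set u : Finset (Fin N) → ℝ :=
    fun S => Real.sqrt (((p * q)⁻¹) ^ S.card) * |hat p F₁ S| with hudef
  set v : Finset (Fin N) → ℝ :=
    fun S => Real.sqrt (((p * q)⁻¹) ^ S.card) * |hat p F₂ S| with hvdef
  have hsqrt_sq : ∀ S : Finset (Fin N),
      Real.sqrt (((p * q)⁻¹) ^ S.card) * Real.sqrt (((p * q)⁻¹) ^ S.card)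
        = ((p * q)⁻¹) ^ S.card := fun S =>
    Real.mul_self_sqrt (by positivity)
  have hu_sq : ∀ S, (u S) ^ 2 = ((p * q)⁻¹) ^ S.card * (hat p F₁ S) ^ 2 := by
    intro S
    rw [hudef]
    rw [mul_pow, sq_abs, sq, hsqrt_sq]
  have hv_sq : ∀ S, (v S) ^ 2 = ((p * q)⁻¹) ^ S.card * (hat p F₂ S) ^ 2 := by
    intro S
    rw [hvdef]
    rw [mul_pow, sq_abs, sq, hsqrt_sq]
  have huv : ∀ S, u S * v S = ((p * q)⁻¹) ^ S.card * (|hat p F₁ S| * |hat p F₂ S|) := by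
    intro S
    rw [hudef, hvdef]
    rw [show Real.sqrt (((p * q)⁻¹) ^ S.card) * |hat p F₁ S| *
        (Real.sqrt (((p * q)⁻¹) ^ S.card) * |hat p F₂ S|)
        = (Real.sqrt (((p * q)⁻¹) ^ S.card) * Real.sqrt (((p * q)⁻¹) ^ S.card)) *
          (|hat p F₁ S| * |hat p F₂ S|) by ring, hsqrt_sq]
  have huv_nonneg : ∀ S, 0 ≤ u S * v S := fun S =>
    mul_nonneg (mul_nonneg (Real.sqrt_nonneg _) (abs_nonneg _))
      (mul_nonneg (Real.sqrt_nonneg _) (abs_nonneg _))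
  -- Parseval for both families
  have hPar1 : ∑ S : Finset (Fin N), (u S) ^ 2 = α := by
    rw [Finset.sum_congr rfl fun S _ => hu_sq S]
    exact parseval hp hq0 F₁
  have hPar2 : ∑ S : Finset (Fin N), (v S) ^ 2 = β := by
    rw [Finset.sum_congr rfl fun S _ => hv_sq S]
    exact parseval hp hq0 F₂
  have hu_empty : u (∅ : Finset (Fin N)) = α := by
    rw [hudef]
    simp [hα_hat, abs_of_nonneg hα0]
  have hv_empty : v (∅ : Finset (Fin N)) = β := by
    rw [hvdef]
    simp [hβ_hat, abs_of_nonneg hβ0]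
  have hPar1' : ∑ S ∈ (Finset.univ : Finset (Finset (Fin N))).erase ∅, (u S) ^ 2 = α - α ^ 2 := by
    have h := Finset.add_sum_erase (Finset.univ : Finset (Finset (Fin N))) (fun S => (u S) ^ 2)
      (Finset.mem_univ ∅)
    simp only [hPar1, hu_empty] at h
    linarith
  have hPar2' : ∑ S ∈ (Finset.univ : Finset (Finset (Fin N))).erase ∅, (v S) ^ 2 = β - β ^ 2 := by
    have h := Finset.add_sum_erase (Finset.univ : Finset (Finset (Fin N))) (fun S => (v S) ^ 2)
      (Finset.mem_univ ∅)
    simp only [hPar2, hv_empty] at h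
    linarith
  -- the vanishing identity, with the empty set separated
  have hvan := vanish hq0 F₁ F₂ hcross
  have hd_empty : ((-(q)⁻¹) ^ (∅ : Finset (Fin N)).card * q ^ (N - (∅ : Finset (Fin N)).card)) *
      (hat p F₁ ∅ * hat p F₂ ∅) = q ^ N * (α * β) := by
    rw [hα_hat, hβ_hat]
    simp
  have hsplit : q ^ N * (α * β) = ∑ S ∈ (Finset.univ : Finset (Finset (Fin N))).erase ∅,
      (-(((-(q)⁻¹) ^ S.card * q ^ (N - S.card)) * (hat p F₁ S * hat p F₂ S))) := by
    have := Finset.add_sum_erase (Finset.univ : Finset (Finset (Fin N)))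
      (fun S => ((-(q)⁻¹) ^ S.card * q ^ (N - S.card)) * (hat p F₁ S * hat p F₂ S))
      (Finset.mem_univ ∅)
    rw [hvan] at this
    rw [Finset.sum_neg_distrib]
    rw [← hd_empty]
    linarith
  -- termwise bound on the nonempty part
  have hterm : ∀ S ∈ (Finset.univ : Finset (Finset (Fin N))).erase ∅,
      -(((-(q)⁻¹) ^ S.card * q ^ (N - S.card)) * (hat p F₁ S * hat p F₂ S))
        ≤ (p * q ^ (N - 1)) * (u S * v S) := by
    intro S hS
    have hSne : S ≠ ∅ := (Finset.mem_erase.mp hS).1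
    have hc1 : 1 ≤ S.card := Finset.card_pos.mpr (Finset.nonempty_of_ne_empty hSne)
    have hcN : S.card ≤ N := by
      simpa using Finset.card_le_card (Finset.subset_univ S)
    set c := S.card with hcdef
    have habs : -(((-(q)⁻¹) ^ c * q ^ (N - c)) * (hat p F₁ S * hat p F₂ S))
        ≤ ((q⁻¹) ^ c * q ^ (N - c)) * (|hat p F₁ S| * |hat p F₂ S|) := by
      have h1 : -(((-(q)⁻¹) ^ c * q ^ (N - c)) * (hat p F₁ S * hat p F₂ S))
          ≤ |((-(q)⁻¹) ^ c * q ^ (N - c)) * (hat p F₁ S * hat p F₂ S)| :=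
        neg_le_abs _
      refine h1.trans (le_of_eq ?_)
      rw [abs_mul, abs_mul, abs_mul, abs_pow, abs_neg, abs_inv,
        abs_of_pos hq0, abs_pow, abs_of_pos hq0]
    refine habs.trans ?_
    have hkey : ((q⁻¹) ^ c * q ^ (N - c)) * (|hat p F₁ S| * |hat p F₂ S|)
        = (p ^ c * q ^ (N - c)) * (u S * v S) := by
      rw [huv]
      have : (p ^ c * q ^ (N - c)) * (((p * q)⁻¹) ^ c * (|hat p F₁ S| * |hat p F₂ S|))
          = (p ^ c * ((p * q)⁻¹) ^ c * q ^ (N - c)) * (|hat p F₁ S| * |hat p F₂ S|) := by ring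
      rw [this]
      congr 1
      have : p ^ c * ((p * q)⁻¹) ^ c = (q⁻¹) ^ c := by
        rw [mul_inv, mul_pow, ← mul_assoc, ← mul_pow, mul_inv_cancel₀ hp.ne', one_pow, one_mul]
      rw [this]
    rw [hkey]
    refine mul_le_mul_of_nonneg_right ?_ (huv_nonneg S)
    -- p^c * q^(N-c) ≤ p * q^(N-1)
    have hsplitc : p ^ c = p * p ^ (c - 1) := by
      conv_lhs => rw [show c = 1 + (c - 1) by omega]
      rw [pow_add, pow_one]
    have hsplitN : q ^ (N - 1) = q ^ (c - 1) * q ^ (N - c) := by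
      rw [← pow_add]
      congr 1
      omega
    rw [hsplitc, hsplitN]
    have h1 : p ^ (c - 1) ≤ q ^ (c - 1) := pow_le_pow_left₀ hp.le hple _
    have h2 : (0:ℝ) ≤ q ^ (N - c) := pow_nonneg hq0.le _
    calc p * p ^ (c - 1) * q ^ (N - c) = p * (p ^ (c - 1) * q ^ (N - c)) := by ring
      _ ≤ p * (q ^ (c - 1) * q ^ (N - c)) :=
        mul_le_mul_of_nonneg_left (mul_le_mul_of_nonneg_right h1 h2) hp.le
  have hαα : 0 ≤ α - α ^ 2 := by
    rw [← hPar1']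
    exact Finset.sum_nonneg fun S _ => sq_nonneg _
  have hββ : 0 ≤ β - β ^ 2 := by
    rw [← hPar2']
    exact Finset.sum_nonneg fun S _ => sq_nonneg _
  -- assemble the main inequality
  have hmain : q ^ N * (α * β)
      ≤ (p * q ^ (N - 1)) * (Real.sqrt (α - α ^ 2) * Real.sqrt (β - β ^ 2)) := by
    rw [hsplit]
    have h1 : ∑ S ∈ (Finset.univ : Finset (Finset (Fin N))).erase ∅,
        (-(((-(q)⁻¹) ^ S.card * q ^ (N - S.card)) * (hat p F₁ S * hat p F₂ S)))
        ≤ ∑ S ∈ (Finset.univ : Finset (Finset (Fin N))).erase ∅,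
          (p * q ^ (N - 1)) * (u S * v S) :=
      Finset.sum_le_sum hterm
    refine h1.trans ?_
    rw [← Finset.mul_sum]
    refine mul_le_mul_of_nonneg_left ?_ (by positivity)
    -- Cauchy-Schwarz
    have hCS := Finset.sum_mul_sq_le_sq_mul_sq
      ((Finset.univ : Finset (Finset (Fin N))).erase ∅) u v
    rw [hPar1', hPar2'] at hCS
    have hsum_nonneg : 0 ≤ ∑ S ∈ (Finset.univ : Finset (Finset (Fin N))).erase ∅, u S * v S :=
      Finset.sum_nonneg fun S _ => huv_nonneg S
    have := Real.sqrt_le_sqrt hCS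
    rw [Real.sqrt_sq hsum_nonneg] at this
    refine this.trans (le_of_eq ?_)
    rw [Real.sqrt_mul hαα]
  -- divide by q^(N-1)
  have hqN : q ^ N = q * q ^ (N - 1) := by
    conv_lhs => rw [show N = 1 + (N - 1) by omega]
    rw [pow_add, pow_one]
  have hkey2 : q * (α * β) ≤ p * (Real.sqrt (α - α ^ 2) * Real.sqrt (β - β ^ 2)) := by
    have hqpow : (0 : ℝ) < q ^ (N - 1) := pow_pos hq0 _
    rw [hqN] at hmain
    have h1 : q ^ (N - 1) * (q * (α * β)) ≤ q ^ (N - 1) *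
        (p * (Real.sqrt (α - α ^ 2) * Real.sqrt (β - β ^ 2))) := by
      calc q ^ (N - 1) * (q * (α * β)) = q * q ^ (N - 1) * (α * β) := by ring
        _ ≤ p * q ^ (N - 1) * (Real.sqrt (α - α ^ 2) * Real.sqrt (β - β ^ 2)) := hmain
        _ = q ^ (N - 1) * (p * (Real.sqrt (α - α ^ 2) * Real.sqrt (β - β ^ 2))) := by ring
    exact le_of_mul_le_mul_left h1 hqpow
  -- square it
  have hsq : q ^ 2 * (α * β) ^ 2 ≤ p ^ 2 * ((α - α ^ 2) * (β - β ^ 2)) := by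
    have hl : 0 ≤ q * (α * β) := by positivity
    have := mul_self_le_mul_self hl hkey2
    calc q ^ 2 * (α * β) ^ 2 = (q * (α * β)) * (q * (α * β)) := by ring
      _ ≤ (p * (Real.sqrt (α - α ^ 2) * Real.sqrt (β - β ^ 2))) *
          (p * (Real.sqrt (α - α ^ 2) * Real.sqrt (β - β ^ 2))) := this
      _ = p ^ 2 * ((Real.sqrt (α - α ^ 2) * Real.sqrt (α - α ^ 2)) *
          (Real.sqrt (β - β ^ 2) * Real.sqrt (β - β ^ 2))) := by ring
      _ = p ^ 2 * ((α - α ^ 2) * (β - β ^ 2)) := by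
          rw [Real.mul_self_sqrt hαα, Real.mul_self_sqrt hββ]
  -- final algebra
  exact final_algebra hp hq0 (by rw [hqdef]; ring) hα0 hβ0 hαα hββ hsq
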